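/- Let A be an m×n real matrix, let P be an m×m orthogonal projector, and let Q be an n×n orthogonal projector. Then ‖A − P A Q‖₂² = sup over vectors v with ‖v‖₂ ≤ 1 of ( ‖(A − P A) v‖₂² + ‖P (A − A Q) v‖₂² ). -/

import Mathlib

open scoped Matrix

/-- The spectral norm of a matrix: the `ℓ² → ℓ²` operator norm. -/
noncomputable def matrixSpectralNorm {m n : ℕ} (M : Matrix (Fin m) (Fin n) ℝ) : ℝ :=
  ‖LinearMap.toContinuousLinearMap (Matrix.toEuclideanLin M)‖

/-- The squared Euclidean (ℓ₂) norm of a vector in `ℝⁿ`. -/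
noncomputable def euclNormSq {n : ℕ} (v : Fin n → ℝ) : ℝ :=
  ‖(WithLp.equiv 2 (Fin n → ℝ)).symm v‖ ^ 2

lemma sq_sSup_aux (S : Set ℝ) (hne : S.Nonempty) (hbdd : BddAbove S)
    (hpos : ∀ x ∈ S, 0 ≤ x) : sSup ((fun x => x ^ 2) '' S) = (sSup S) ^ 2 := by
  have h0 : 0 ≤ sSup S := le_csSup_of_le hbdd hne.choose_spec (hpos _ hne.choose_spec)
  refine IsLUB.csSup_eq ⟨?_, ?_⟩ (hne.image _)
  · rintro - ⟨x, hx, rfl⟩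
    exact pow_le_pow_left₀ (hpos x hx) (le_csSup hbdd hx) 2
  · intro b hb
    have hb0 : 0 ≤ b := le_trans (sq_nonneg _) (hb ⟨_, hne.choose_spec, rfl⟩)
    have : sSup S ≤ Real.sqrt b := by
      refine csSup_le hne fun x hx => ?_
      have := hb ⟨x, hx, rfl⟩
      exact (Real.le_sqrt (hpos x hx) hb0).mpr this
    calc (sSup S) ^ 2 ≤ (Real.sqrt b) ^ 2 := pow_le_pow_left₀ h0 this 2
      _ = b := Real.sq_sqrt hb0


/-- For an `m × n` real matrix `A`, an `m × m` orthogonal projector `P`, and an `n × n`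
orthogonal projector `Q`,
`‖A − P A Q‖₂² = sup_{‖v‖₂ ≤ 1} ( ‖(A − P A) v‖₂² + ‖P (A − A Q) v‖₂² )`. -/
theorem cur_error_spectral_sup {m n : ℕ}
    (A : Matrix (Fin m) (Fin n) ℝ)
    (P : Matrix (Fin m) (Fin m) ℝ) (hP1 : Pᵀ = P) (hP2 : P * P = P)
    (Q : Matrix (Fin n) (Fin n) ℝ) (hQ1 : Qᵀ = Q) (hQ2 : Q * Q = Q) :
    matrixSpectralNorm (A - P * A * Q) ^ 2 =
      sSup { x : ℝ | ∃ v : Fin n → ℝ, ‖(WithLp.equiv 2 (Fin n → ℝ)).symm v‖ ≤ 1 ∧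
        x = euclNormSq ((A - P * A).mulVec v) + euclNormSq ((P * (A - A * Q)).mulVec v) } := by
  set M := A - P * A * Q with hM
  -- pointwise Pythagorean identity
  have key : ∀ v : Fin n → ℝ,
      euclNormSq ((A - P * A).mulVec v) + euclNormSq ((P * (A - A * Q)).mulVec v)
        = euclNormSq (M.mulVec v) := by
    intro v
    have hsplit : M = (A - P * A) + P * (A - A * Q) := by
      rw [hM, Matrix.mul_sub, ← Matrix.mul_assoc]; abel
    have horth : ((A - P * A).mulVec v) ⬝ᵥ ((P * (A - A * Q)).mulVec v) = 0 := by
      have : (A - P * A)ᵀ * (P * (A - A * Q)) = 0 := by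
        rw [Matrix.transpose_sub, Matrix.transpose_mul, hP1]
        have h : (Aᵀ - Aᵀ * P) * (P * (A - A * Q)) =
            Aᵀ * ((P - P * P) * (A - A * Q)) := by
          simp only [Matrix.sub_mul, Matrix.mul_sub, Matrix.mul_assoc]
        rw [h, hP2, sub_self, Matrix.zero_mul, Matrix.mul_zero]
      calc ((A - P * A).mulVec v) ⬝ᵥ ((P * (A - A * Q)).mulVec v)
          = v ⬝ᵥ ((A - P * A)ᵀ * (P * (A - A * Q))).mulVec v := by
            conv_rhs => rw [← Matrix.mulVec_mulVec, Matrix.dotProduct_mulVec,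
              Matrix.vecMul_transpose]
        _ = 0 := by rw [this]; simp
    let x : EuclideanSpace ℝ (Fin m) := (WithLp.equiv 2 (Fin m → ℝ)).symm ((A - P * A).mulVec v)
    let y : EuclideanSpace ℝ (Fin m) := (WithLp.equiv 2 (Fin m → ℝ)).symm ((P * (A - A * Q)).mulVec v)
    have hinner : inner ℝ x y = (0 : ℝ) := by
      show inner ℝ ((WithLp.equiv 2 (Fin m → ℝ)).symm ((A - P * A).mulVec v))
        ((WithLp.equiv 2 (Fin m → ℝ)).symm ((P * (A - A * Q)).mulVec v)) = (0 : ℝ)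
      rw [EuclideanSpace.inner_eq_star_dotProduct, dotProduct_comm]
      simpa using horth
    have hxy : (WithLp.equiv 2 (Fin m → ℝ)).symm (M.mulVec v) = x + y := by
      rw [hsplit, Matrix.add_mulVec]
      rfl
    simp only [euclNormSq, hxy]
    rw [norm_add_sq_real, hinner]
    ring
  -- the set is the image of the closed unit ball
  set T := LinearMap.toContinuousLinearMap (Matrix.toEuclideanLin M) with hT
  have hset : { x : ℝ | ∃ v : Fin n → ℝ, ‖(WithLp.equiv 2 (Fin n → ℝ)).symm v‖ ≤ 1 ∧
        x = euclNormSq ((A - P * A).mulVec v) + euclNormSq ((P * (A - A * Q)).mulVec v) }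
      = (fun t => t ^ 2) '' ((fun x => ‖T x‖) '' Metric.closedBall 0 1) := by
    ext t
    constructor
    · rintro ⟨v, hv, rfl⟩
      refine ⟨‖T ((WithLp.equiv 2 (Fin n → ℝ)).symm v)‖,
        ⟨(WithLp.equiv 2 (Fin n → ℝ)).symm v, Metric.mem_closedBall.mpr (by simpa using hv), rfl⟩, ?_⟩
      rw [key v]
      simp only [euclNormSq, hT, LinearMap.coe_toContinuousLinearMap',
        Matrix.toEuclideanLin_apply]
      rfl
    · rintro ⟨-, ⟨u, hu, rfl⟩, rfl⟩
      refine ⟨WithLp.equiv 2 (Fin n → ℝ) u, by simpa using Metric.mem_closedBall.mp hu, ?_⟩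
      rw [key]
      simp only [euclNormSq, hT, LinearMap.coe_toContinuousLinearMap',
        Matrix.toEuclideanLin_apply]
      rfl
  rw [hset, sq_sSup_aux _ ((Metric.nonempty_closedBall.mpr zero_le_one).image _)
    ⟨‖T‖, by rintro - ⟨x, hx, rfl⟩; exact T.unit_le_opNorm x (mem_closedBall_zero_iff.1 hx)⟩
    (by rintro - ⟨x, _, rfl⟩; exact norm_nonneg _),
    ContinuousLinearMap.sSup_unitClosedBall_eq_norm]
  rfl
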